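/- Let p be a prime with p ≡ 1 (mod 8). Then the reduction map GL₂(ℤ[1/2]) → GL₂(ℤ/pℤ), induced by the unique ring homomorphism ℤ[1/2] → ℤ/pℤ (which exists since 2 is invertible mod p) applied entrywise, is not surjective. -/

import Mathlib

open Matrix

/-- Any unit of `ℤ[1/2]` maps to a square in `ZMod p` when `p ≡ 1 (mod 8)`. -/
lemma unit_image_isSquare (p : ℕ) (hp : p.Prime) (h8 : p % 8 = 1)
    (φ : Localization.Away (2 : ℤ) →+* ZMod p)
    (x : (Localization.Away (2 : ℤ))ˣ) : IsSquare (φ x.val) := by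
  haveI : Fact p.Prime := ⟨hp⟩
  have hp2 : p ≠ 2 := by omega
  have hsq2 : IsSquare (2 : ZMod p) := (ZMod.exists_sq_eq_two_iff hp2).2 (Or.inl h8)
  have hsqneg : IsSquare (-1 : ZMod p) := ZMod.exists_sq_eq_neg_one_iff.2 (by omega)
  have hchar : ringChar (ZMod p) ≠ 2 := by rwa [ZMod.ringChar_zmod_n]
  have h2ne : (2 : ZMod p) ≠ 0 := Ring.two_ne_zero hchar
  -- get representations
  obtain ⟨n, a, ha⟩ := IsLocalization.Away.surj (R := ℤ)
    (S := Localization.Away (2 : ℤ)) 2 x.val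
  obtain ⟨m, b, hb⟩ := IsLocalization.Away.surj (R := ℤ)
    (S := Localization.Away (2 : ℤ)) 2 (↑x⁻¹ : Localization.Away (2 : ℤ))
  have hinj : Function.Injective (algebraMap ℤ (Localization.Away (2 : ℤ))) := by
    apply IsLocalization.injective (M := Submonoid.powers (2 : ℤ))
    intro y hy
    obtain ⟨k, rfl⟩ := hy
    exact pow_mem (mem_nonZeroDivisors_of_ne_zero (by norm_num)) k
  have hab : a * b = 2 ^ (n + m) := by
    apply hinj
    have h1 : (x.val * ↑x⁻¹) * (algebraMap ℤ _ 2 ^ n * algebraMap ℤ _ 2 ^ m)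
        = algebraMap ℤ _ a * algebraMap ℤ _ b := by
      rw [mul_mul_mul_comm, ha, hb]
    rw [Units.mul_inv, one_mul] at h1
    rw [_root_.map_mul, ← h1, map_pow, pow_add]
  -- a = ±2^k
  have hdvd : a ∣ 2 ^ (n + m) := ⟨b, hab.symm⟩
  have hna : a.natAbs ∣ 2 ^ (n + m) := by
    have h' := Int.natAbs_dvd_natAbs.2 hdvd
    rwa [Int.natAbs_pow, show ((2:ℤ).natAbs) = 2 from rfl] at h'
  obtain ⟨k, _, hk⟩ := (Nat.dvd_prime_pow Nat.prime_two).1 hna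
  -- φ(a) is a square
  have hφa : IsSquare ((a : ZMod p)) := by
    rcases Int.natAbs_eq a with h | h
    · rw [h, hk]; push_cast; exact hsq2.pow k
    · rw [h, hk]; push_cast
      have := hsqneg.mul (hsq2.pow k)
      rwa [neg_one_mul] at this
  -- apply φ to ha
  have key : φ x.val * (2 : ZMod p) ^ n = (a : ZMod p) := by
    have h1 := congrArg φ ha
    rw [_root_.map_mul, map_pow] at h1
    have h2 : φ (algebraMap ℤ (Localization.Away (2 : ℤ)) 2) = (2 : ZMod p) := by
      have := eq_intCast (φ.comp (algebraMap ℤ (Localization.Away (2 : ℤ)))) 2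
      rw [RingHom.comp_apply] at this
      rw [this]; norm_num
    have ha' : φ (algebraMap ℤ (Localization.Away (2 : ℤ)) a) = (a : ZMod p) := by
      have := eq_intCast (φ.comp (algebraMap ℤ (Localization.Away (2 : ℤ)))) a
      rwa [RingHom.comp_apply] at this
    rw [h2, ha'] at h1
    exact h1
  have h2n : ((2 : ZMod p) ^ n) ≠ 0 := pow_ne_zero n h2ne
  have : φ x.val = (a : ZMod p) * ((2 : ZMod p) ^ n)⁻¹ := by
    field_simp [← key]
    exact key
  rw [this]
  exact hφa.mul ((hsq2.pow n).inv)

theorem gl2_half_integers_reduction_not_surjective (p : ℕ) (hp : p.Prime)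
    (h8 : p % 8 = 1) (φ : Localization.Away (2 : ℤ) →+* ZMod p) :
    ¬ Function.Surjective
        (Matrix.GeneralLinearGroup.map φ :
          GL (Fin 2) (Localization.Away (2 : ℤ)) →* GL (Fin 2) (ZMod p)) := by
  haveI : Fact p.Prime := ⟨hp⟩
  have hp2 : p ≠ 2 := by omega
  have hchar : ringChar (ZMod p) ≠ 2 := by rwa [ZMod.ringChar_zmod_n]
  obtain ⟨a, ha⟩ := FiniteField.exists_nonsquare hchar
  have ha0 : a ≠ 0 := by rintro rfl; exact ha ⟨0, by simp⟩
  intro hsurj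
  set A : Matrix (Fin 2) (Fin 2) (ZMod p) := !![a, 0; 0, 1] with hA
  have hdet : A.det = a := by simp [hA, Matrix.det_fin_two]
  obtain ⟨M, hM⟩ := hsurj (Matrix.GeneralLinearGroup.mkOfDetNeZero A (by rw [hdet]; exact ha0))
  apply ha
  have hval : (M.val.map φ) = A := by
    have := congrArg (fun g : GL (Fin 2) (ZMod p) => (g : Matrix (Fin 2) (Fin 2) (ZMod p))) hM
    simpa [Matrix.GeneralLinearGroup.map, Matrix.GeneralLinearGroup.mkOfDetNeZero] using this
  have hφdet : φ M.val.det = a := by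
    rw [RingHom.map_det, RingHom.mapMatrix_apply, hval, hdet]
  rw [← hφdet]
  have : M.val.det = ((Matrix.GeneralLinearGroup.det M : (Localization.Away (2 : ℤ))ˣ) :
      Localization.Away (2 : ℤ)) := rfl
  rw [this]
  exact unit_image_isSquare p hp h8 φ _
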